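/- Let H be a normal subgroup of a finite group G and g ∈ G. Then p_g^{(1,1)}(H,G) ≤ [G:H] · p_1(G), where p_1(G) = d(G) is the commutativity degree of G. -/

import Mathlib

open scoped BigOperators

/-- The commutator `[a,b] = a⁻¹b⁻¹ab`. -/
def gcomm {G : Type*} [Group G] (a b : G) : G := a⁻¹ * b⁻¹ * a * b

/-- Left-normed iterated commutator of a list of group elements. -/
def lcomm {G : Type*} [Group G] : List G → G
  | [] => 1
  | a :: t => t.foldl gcomm a

/-- `pgen H K n m g` is the probability that a randomly chosen left-normed commutator
of weight `n + m` on `Hⁿ × Kᵐ` equals `g`. -/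
noncomputable def pgen {G : Type*} [Group G] (H K : Subgroup G) (n m : ℕ) (g : G) : ℚ :=
  (Nat.card {z : (Fin n → H) × (Fin m → K) //
      lcomm (List.ofFn (fun i => ((z.1 i : G))) ++ List.ofFn (fun j => ((z.2 j : G)))) = g} : ℚ) /
    ((Nat.card H : ℚ) ^ n * (Nat.card K : ℚ) ^ m)

open Classical in
noncomputable def pick {G : Type*} [Group G] (g x : G) : G :=
  if h : ∃ y : G, gcomm x y = g then h.choose else 1

lemma pick_spec {G : Type*} [Group G] {g x y : G} (hy : gcomm x y = g) :
    gcomm x (y * (pick g x)⁻¹) = 1 := by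
  have hex : ∃ y : G, gcomm x y = g := ⟨y, hy⟩
  have hp : gcomm x (pick g x) = g := by
    rw [pick, dif_pos hex]
    exact hex.choose_spec
  set p := pick g x
  simp only [gcomm] at hy hp ⊢
  have hy' : y⁻¹ * x * y = x * g := by rw [← hy]; group
  have hp' : x * g = p⁻¹ * x * p := by rw [← hp]; group
  calc x⁻¹ * (y * p⁻¹)⁻¹ * x * (y * p⁻¹) = x⁻¹ * p * (y⁻¹ * x * y) * p⁻¹ := by group
    _ = 1 := by rw [hy', hp']; group

lemma lcomm_pair {G : Type*} [Group G] (a b : G) : lcomm [a, b] = gcomm a b := rfl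

theorem stmt16 (G : Type*) [Group G] [Fintype G] (H : Subgroup G) [H.Normal] (g : G) :
    pgen H ⊤ 1 1 g ≤ (H.index : ℚ) * pgen (⊤ : Subgroup G) ⊤ 1 1 (1 : G) := by
  unfold pgen
  set A := {z : (Fin 1 → H) × (Fin 1 → (⊤ : Subgroup G)) //
      lcomm (List.ofFn (fun i => ((z.1 i : G))) ++ List.ofFn (fun j => ((z.2 j : G)))) = g} with hA
  set B := {z : (Fin 1 → (⊤ : Subgroup G)) × (Fin 1 → (⊤ : Subgroup G)) //
      lcomm (List.ofFn (fun i => ((z.1 i : G))) ++ List.ofFn (fun j => ((z.2 j : G)))) = (1 : G)} with hB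
  have hcard : Nat.card A ≤ Nat.card B := by
    apply Nat.card_le_card_of_injective
      (fun z : A => (⟨(fun _ => ⟨(z.1.1 0 : G), Subgroup.mem_top _⟩,
        fun _ => ⟨(z.1.2 0 : G) * (pick g (z.1.1 0 : G))⁻¹, Subgroup.mem_top _⟩), by
      have hz := z.2
      simp only [List.ofFn_succ, List.ofFn_zero, Fin.succ] at hz ⊢
      simp only [List.cons_append, List.nil_append, lcomm_pair] at hz ⊢
      exact pick_spec hz⟩ : B))
    · rintro ⟨⟨a, b⟩, hz⟩ ⟨⟨a', b'⟩, hz'⟩ h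
      simp only [Subtype.mk.injEq, Prod.mk.injEq, funext_iff] at h
      obtain ⟨h1, h2⟩ := h
      have ha : a 0 = a' 0 := Subtype.ext (h1 0)
      have hb : b 0 = b' 0 := by
        have h2' := h2 0
        rw [h1 0] at h2'
        exact Subtype.ext (mul_right_cancel h2')
      refine Subtype.ext (Prod.ext ?_ ?_) <;> funext i <;>
        rw [Subsingleton.elim i 0]
      · exact ha
      · exact hb
  have hHpos : 0 < (Nat.card H : ℚ) := by
    have : 0 < Nat.card H := Nat.card_pos
    exact_mod_cast this
  have hGpos : 0 < (Nat.card G : ℚ) := by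
    have : 0 < Nat.card G := Nat.card_pos
    exact_mod_cast this
  have hTop : Nat.card (⊤ : Subgroup G) = Nat.card G := by
    simpa using Subgroup.card_top (G := G)
  have hrel : (Nat.card H : ℚ) * (H.index : ℚ) = (Nat.card G : ℚ) := by
    exact_mod_cast congrArg (Nat.cast : ℕ → ℚ) (Subgroup.card_mul_index H)
  rw [hTop]
  have hipos : 0 < (H.index : ℚ) := by
    have : 0 < H.index := Nat.pos_of_ne_zero (Subgroup.index_ne_zero_of_finite)
    exact_mod_cast this
  have key : (H.index : ℚ) * ((Nat.card B : ℚ) / ((Nat.card G : ℚ) ^ 1 * (Nat.card G : ℚ) ^ 1))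
      = (Nat.card B : ℚ) / ((Nat.card H : ℚ) ^ 1 * (Nat.card G : ℚ) ^ 1) := by
    have hrel2 : (Nat.card H : ℚ) * (H.index : ℚ) = (Fintype.card G : ℚ) := by
      rw [hrel, Nat.card_eq_fintype_card]
    field_simp
    linear_combination (Nat.card B : ℚ) * hrel
  rw [key]
  have hc : (Nat.card A : ℚ) ≤ (Nat.card B : ℚ) := by exact_mod_cast hcard
  gcongr
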